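/- Let α < β < γ with relations: (g_α − Λ) D_α D_β = x_β D_α; g_α D_α D_γ = x_γ D_α; g D_β D_γ − (g − Λ) D_γ D_β = x_γ D_β − x_β D_γ, where g ≠ 0 and g_α ∉ {0, Λ}, x_β, x_γ ∈ ℂ, Λ ∈ ℝ. Then the two complete reductions of D_α D_β D_γ agree (the B^{(4)}-type relations satisfy the diamond condition). -/

import Mathlib

/- Free associative ℂ-algebra on three generators `D 0 = D_α`, `D 1 = D_β`, `D 2 = D_γ`
   (ordering α < β < γ).  We encode the quadratic relations in the generic form
     D_α D_β = q1 • D_β D_α + b1 • D_α - a1 • D_β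
     D_α D_γ = q2 • D_γ D_α + c2 • D_α - a2 • D_γ
     D_β D_γ = q3 • D_γ D_β + c3 • D_β - b3 • D_γ
   used as rewriting rules replacing `D_i D_j` for `i < j`. -/
noncomputable def D (i : Fin 3) : FreeAlgebra ℂ (Fin 3) := FreeAlgebra.ι ℂ i

/-- The result of the complete reduction of `D 0 * D 1 * D 2` to ordered monomials
obtained by first rewriting the leftmost pair `(D 0 * D 1)`. -/
noncomputable def leftRed (q1 q2 q3 a1 b1 a2 c2 b3 c3 : ℂ) : FreeAlgebra ℂ (Fin 3) :=
  (q1*q2*q3) • (D 2 * D 1 * D 0) + (q1*q2*c3 + q1*c2) • (D 1 * D 0)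
  + (b1*q2 - q1*q2*b3) • (D 2 * D 0) + (-(q1*a2*q3) - a1*q3) • (D 2 * D 1)
  + (b1*c2) • D 0 + (-(q1*a2*c3) - a1*c3) • D 1
  + (q1*a2*b3 - b1*a2 + a1*b3) • D 2

/-- The result of the complete reduction of `D 0 * D 1 * D 2` to ordered monomials
obtained by first rewriting the rightmost pair `(D 1 * D 2)`. -/
noncomputable def rightRed (q1 q2 q3 a1 b1 a2 c2 b3 c3 : ℂ) : FreeAlgebra ℂ (Fin 3) :=
  (q1*q2*q3) • (D 2 * D 1 * D 0) + (q3*c2*q1 + c3*q1) • (D 1 * D 0)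
  + (q2*q3*b1 - b3*q2) • (D 2 * D 0) + (-(q3*a2) - q2*q3*a1) • (D 2 * D 1)
  + (q3*c2*b1 + c3*b1 - b3*c2) • D 0 + (-(q3*c2*a1) - c3*a1) • D 1
  + (b3*a2) • D 2

private lemma B4_aux (g gα u xβ xγ : ℂ) (hg : g ≠ 0) (hgα : gα ≠ 0) (hu : u ≠ 0) :
    (xβ/u) * (xγ/gα) = ((g-gα+u)/g) * (xγ/gα) * (xβ/u) + (xγ/g) * (xβ/u) - (xβ/g) * (xγ/gα) := by
  field_simp
  ring

/-- B⁽⁴⁾ relations: (g_α−Λ) D_α D_β = x_β D_α, g_α D_α D_γ = x_γ D_α,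
g D_β D_γ − (g−Λ) D_γ D_β = x_γ D_β − x_β D_γ (x_α = 0).
Diamond condition holds. -/
theorem B4_diamond (g gα Λ : ℝ) (hg : g ≠ 0) (hgα : gα ≠ 0) (hgαΛ : gα ≠ Λ) (xβ xγ : ℂ) :
    leftRed 0 0 (((g-Λ)/g : ℝ):ℂ) 0 (xβ/((gα:ℂ)-Λ)) 0 (xγ/(gα:ℂ)) (xβ/(g:ℂ)) (xγ/(g:ℂ))
      = rightRed 0 0 (((g-Λ)/g : ℝ):ℂ) 0 (xβ/((gα:ℂ)-Λ)) 0 (xγ/(gα:ℂ)) (xβ/(g:ℂ))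
        (xγ/(g:ℂ)) := by
  have hgC : (g:ℂ) ≠ 0 := by exact_mod_cast hg
  have hgαC : (gα:ℂ) ≠ 0 := by exact_mod_cast hgα
  have hgαΛC : (gα:ℂ) - Λ ≠ 0 := by
    intro h
    exact hgαΛ (by exact_mod_cast sub_eq_zero.mp h)
  unfold leftRed rightRed
  have hq3 : (((g-Λ)/g : ℝ):ℂ) = ((g:ℂ) - gα + ((gα:ℂ)-Λ))/(g:ℂ) := by push_cast; ring
  have hcoef : (xβ/((gα:ℂ)-Λ)) * (xγ/(gα:ℂ))
      = (((g-Λ)/g : ℝ):ℂ) * (xγ/(gα:ℂ)) * (xβ/((gα:ℂ)-Λ))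
        + (xγ/(g:ℂ)) * (xβ/((gα:ℂ)-Λ)) - (xβ/(g:ℂ)) * (xγ/(gα:ℂ)) := by
    rw [hq3]
    exact B4_aux _ _ _ _ _ hgC hgαC hgαΛC
  rw [hcoef]
  simp
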